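/- arXiv:2602.14195 — 3 statements merged into one kernel-verified Lean document; each statement's English description precedes it below -/
import Mathlib

section
/- Let ω = γ₁e₁ + γ₂e₂ be a bicomplex algebraic number with γ₁, γ₂ complex algebraic numbers. If the minimal polynomials of γ₁ and γ₂ over ℚ are equal, the minimal polynomial of ω over ℚ equals this common polynomial; if they are distinct (hence coprime irreducible), the minimal polynomial of ω over ℚ is their product. -/
open Polynomial

lemma aeval_pair (γ₁ γ₂ : ℂ) (p : ℚ[X]) :
    aeval ((γ₁, γ₂) : ℂ × ℂ) p = (aeval γ₁ p, aeval γ₂ p) := by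
  have h1 := Polynomial.aeval_algHom_apply (AlgHom.fst ℚ ℂ ℂ) ((γ₁, γ₂) : ℂ × ℂ) p
  have h2 := Polynomial.aeval_algHom_apply (AlgHom.snd ℚ ℂ ℂ) ((γ₁, γ₂) : ℂ × ℂ) p
  exact Prod.ext (by simpa using h1.symm) (by simpa using h2.symm)

/-- Minimal polynomial of a bicomplex algebraic number `ω = (γ₁, γ₂)`: if the
minimal polynomials of `γ₁` and `γ₂` agree then it is their common value,
otherwise it is their product. -/
theorem bicomplex_minpoly (γ₁ γ₂ : ℂ) (h₁ : IsAlgebraic ℚ γ₁) (h₂ : IsAlgebraic ℚ γ₂) :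
    (minpoly ℚ γ₁ = minpoly ℚ γ₂ →
        minpoly ℚ ((γ₁, γ₂) : ℂ × ℂ) = minpoly ℚ γ₁) ∧
    (minpoly ℚ γ₁ ≠ minpoly ℚ γ₂ →
        minpoly ℚ ((γ₁, γ₂) : ℂ × ℂ) = minpoly ℚ γ₁ * minpoly ℚ γ₂) := by
  have hi₁ : IsIntegral ℚ γ₁ := h₁.isIntegral
  have hi₂ : IsIntegral ℚ γ₂ := h₂.isIntegral
  have hm₁ : (minpoly ℚ γ₁).Monic := minpoly.monic hi₁
  have hm₂ : (minpoly ℚ γ₂).Monic := minpoly.monic hi₂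
  have hm0' : (aeval γ₁ (minpoly ℚ ((γ₁, γ₂) : ℂ × ℂ)),
      aeval γ₂ (minpoly ℚ ((γ₁, γ₂) : ℂ × ℂ))) = (0 : ℂ × ℂ) := by
    rw [← aeval_pair]; exact minpoly.aeval _ _
  have hd₁ : minpoly ℚ γ₁ ∣ minpoly ℚ ((γ₁, γ₂) : ℂ × ℂ) :=
    minpoly.dvd ℚ γ₁ (congrArg Prod.fst hm0')
  have hd₂ : minpoly ℚ γ₂ ∣ minpoly ℚ ((γ₁, γ₂) : ℂ × ℂ) :=
    minpoly.dvd ℚ γ₂ (congrArg Prod.snd hm0')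
  have hmm : (minpoly ℚ ((γ₁, γ₂) : ℂ × ℂ)).Monic := by
    refine minpoly.monic ⟨minpoly ℚ γ₁ * minpoly ℚ γ₂, hm₁.mul hm₂, ?_⟩
    rw [← Polynomial.aeval_def, aeval_pair]; simp [minpoly.aeval]
  constructor
  · intro heq
    have h0 : aeval ((γ₁, γ₂) : ℂ × ℂ) (minpoly ℚ γ₁) = 0 := by
      rw [aeval_pair, Prod.mk_eq_zero]
      exact ⟨minpoly.aeval ℚ γ₁, by rw [heq]; exact minpoly.aeval ℚ γ₂⟩
    have hdm : minpoly ℚ ((γ₁, γ₂) : ℂ × ℂ) ∣ minpoly ℚ γ₁ := minpoly.dvd ℚ _ h0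
    exact eq_of_monic_of_associated hmm hm₁ (associated_of_dvd_dvd hdm hd₁)
  · intro hne
    have hirr₁ : Irreducible (minpoly ℚ γ₁) := minpoly.irreducible hi₁
    have hirr₂ : Irreducible (minpoly ℚ γ₂) := minpoly.irreducible hi₂
    have hcop : IsCoprime (minpoly ℚ γ₁) (minpoly ℚ γ₂) := by
      rw [Irreducible.coprime_iff_not_dvd hirr₁]
      intro hdvd
      exact hne (eq_of_monic_of_associated hm₁ hm₂ (hirr₁.associated_of_dvd hirr₂ hdvd))
    have h0 : aeval ((γ₁, γ₂) : ℂ × ℂ) (minpoly ℚ γ₁ * minpoly ℚ γ₂) = 0 := by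
      rw [aeval_pair]; simp [minpoly.aeval]
    have hdm : minpoly ℚ ((γ₁, γ₂) : ℂ × ℂ) ∣ minpoly ℚ γ₁ * minpoly ℚ γ₂ :=
      minpoly.dvd ℚ _ h0
    exact eq_of_monic_of_associated hmm (hm₁.mul hm₂)
      (associated_of_dvd_dvd hdm (hcop.mul_dvd hd₁ hd₂))
end

section
/- Let P ∈ ℚ[X] be a separable monic polynomial of degree n with r real roots and 2s non-real complex roots (n = r + 2s), and consider its n² bicomplex roots in 𝔹 = ℂ × ℂ. Then: exactly r roots are real (both components equal and real), exactly r(r−1) roots are non-real hyperbolic (both components real but distinct), exactly 2s roots lie in ℂ·e₁+ℂ·e₂ with equal components and non-real (the diagonal copy of ℂ), exactly 2s roots have components that are complex conjugates of each other and non-real, and the remaining 4s(s+r−1) roots fall in none of these classes. -/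
open Polynomial

lemma ncard_prod_aux {α β : Type*} {s : Set α} {t : Set β} (hs : s.Finite) (ht : t.Finite) :
    (s ×ˢ t).ncard = s.ncard * t.ncard := by
  rw [← hs.coe_toFinset, ← ht.coe_toFinset, ← Finset.coe_product,
    Set.ncard_coe_finset, Set.ncard_coe_finset, Set.ncard_coe_finset, Finset.card_product]

lemma arith_aux (r s : ℕ) :
    (r + 2 * s) * (r + 2 * s) =
      (r + (r * (r - 1) + (2 * s + 2 * s))) + 4 * s * (s + r - 1) := by
  rcases s with _ | t <;> rcases r with _ | k <;>
    simp [Nat.succ_sub_one, Nat.mul_succ, Nat.succ_mul] <;> ring_nf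

/-- Classification of the `n²` bicomplex roots of a separable monic `P ∈ ℚ[X]`
of degree `n = r + 2s` with `r` real roots: `r` real roots, `r(r−1)` non-real
hyperbolic roots, `2s` non-real roots on the diagonal copy of ℂ, `2s` non-real
roots with conjugate components, and `4s(s+r−1)` roots in none of these classes. -/
theorem bicomplex_root_classification (P : ℚ[X]) (hP : P.Monic) (hsep : P.Separable)
    (n r s : ℕ) (hdeg : P.natDegree = n)
    (hr : {α : ℂ | aeval α P = 0 ∧ α.im = 0}.ncard = r)
    (hn : n = r + 2 * s) :
    {ψ : ℂ × ℂ | (aeval ψ.1 P = 0 ∧ aeval ψ.2 P = 0) ∧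
        ψ.1 = ψ.2 ∧ ψ.1.im = 0}.ncard = r ∧
    {ψ : ℂ × ℂ | (aeval ψ.1 P = 0 ∧ aeval ψ.2 P = 0) ∧
        ψ.1.im = 0 ∧ ψ.2.im = 0 ∧ ψ.1 ≠ ψ.2}.ncard = r * (r - 1) ∧
    {ψ : ℂ × ℂ | (aeval ψ.1 P = 0 ∧ aeval ψ.2 P = 0) ∧
        ψ.1 = ψ.2 ∧ ψ.1.im ≠ 0}.ncard = 2 * s ∧
    {ψ : ℂ × ℂ | (aeval ψ.1 P = 0 ∧ aeval ψ.2 P = 0) ∧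
        ψ.2 = (starRingEnd ℂ) ψ.1 ∧ ψ.1.im ≠ 0}.ncard = 2 * s ∧
    {ψ : ℂ × ℂ | (aeval ψ.1 P = 0 ∧ aeval ψ.2 P = 0) ∧
        ¬(ψ.1.im = 0 ∧ ψ.2.im = 0) ∧ ψ.1 ≠ ψ.2 ∧
        ψ.2 ≠ (starRingEnd ℂ) ψ.1}.ncard = 4 * s * (s + r - 1) := by
  classical
  have hP0 : P ≠ 0 := hP.ne_zero
  have hQ0 : P.map (algebraMap ℚ ℂ) ≠ 0 :=
    (Polynomial.map_ne_zero_iff (algebraMap ℚ ℂ).injective).mpr hP0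
  have hmem : ∀ α : ℂ, aeval α P = 0 ↔ α ∈ (P.map (algebraMap ℚ ℂ)).roots := by
    intro α
    rw [Polynomial.mem_roots hQ0, Polynomial.IsRoot, Polynomial.eval_map,
      ← Polynomial.aeval_def]
  have hnodup : (P.map (algebraMap ℚ ℂ)).roots.Nodup := Polynomial.nodup_roots hsep.map
  set A : Set ℂ := {α : ℂ | aeval α P = 0} with hA
  have hAeq : A = ↑(P.map (algebraMap ℚ ℂ)).roots.toFinset := by
    ext α
    rw [Finset.mem_coe, Multiset.mem_toFinset]
    exact hmem α
  have hAfin : A.Finite := by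
    rw [hAeq]; exact ((P.map (algebraMap ℚ ℂ)).roots.toFinset).finite_toSet
  have hAcard : A.ncard = n := by
    rw [hAeq, Set.ncard_coe_finset, Multiset.toFinset_card_of_nodup hnodup,
      ← (IsAlgClosed.splits (P.map (algebraMap ℚ ℂ))).natDegree_eq_card_roots,
        Polynomial.natDegree_map, hdeg]
  set Re : Set ℂ := {α : ℂ | aeval α P = 0 ∧ α.im = 0} with hRe
  set NR : Set ℂ := {α : ℂ | aeval α P = 0 ∧ α.im ≠ 0} with hNR
  have hReA : Re ⊆ A := fun α h => h.1
  have hNRA : NR ⊆ A := fun α h => h.1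
  have hRefin : Re.Finite := hAfin.subset hReA
  have hNRfin : NR.Finite := hAfin.subset hNRA
  have hsplitA : Re ∪ NR = A := by
    ext α; by_cases h : α.im = 0 <;> simp [hRe, hNR, hA, h]
  have hdisjRN : Disjoint Re NR := by
    rw [Set.disjoint_left]; rintro α ⟨_, h0⟩ ⟨_, h1⟩; exact h1 h0
  have hNRcard : NR.ncard = 2 * s := by
    have h := Set.ncard_union_eq hdisjRN hRefin hNRfin
    rw [hsplitA, hAcard, hr] at h
    omega
  have hconj : ∀ α : ℂ, aeval α P = 0 → aeval ((starRingEnd ℂ) α) P = 0 := by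
    intro α h
    have h2 : (starRingEnd ℂ) (aeval α P) = aeval ((starRingEnd ℂ) α) P := by
      rw [Polynomial.aeval_def, Polynomial.aeval_def, Polynomial.hom_eval₂]
      congr 1
      exact Subsingleton.elim _ _
    rw [h, map_zero] at h2; exact h2.symm
  have hinjd : Function.Injective (fun α : ℂ => (α, α)) := fun a b h => (Prod.ext_iff.mp h).1
  have hinjc : Function.Injective (fun α : ℂ => (α, (starRingEnd ℂ) α)) :=
    fun a b h => (Prod.ext_iff.mp h).1
  -- Set 1
  have h1 : {ψ : ℂ × ℂ | (aeval ψ.1 P = 0 ∧ aeval ψ.2 P = 0) ∧ ψ.1 = ψ.2 ∧ ψ.1.im = 0}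
      = (fun α : ℂ => (α, α)) '' Re := by
    ext ⟨a, b⟩
    simp only [Set.mem_setOf_eq, Set.mem_image, hRe, Prod.mk.injEq]
    constructor
    · rintro ⟨⟨ha, hb⟩, hab, him⟩
      exact ⟨a, ⟨ha, him⟩, rfl, hab⟩
    · rintro ⟨x, ⟨hx, him⟩, rfl, rfl⟩
      exact ⟨⟨hx, hx⟩, rfl, him⟩
  have c1 : {ψ : ℂ × ℂ | (aeval ψ.1 P = 0 ∧ aeval ψ.2 P = 0) ∧ ψ.1 = ψ.2 ∧ ψ.1.im = 0}.ncard
      = r := by rw [h1, Set.ncard_image_of_injective _ hinjd, hr]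
  -- Set 2
  have h2 : {ψ : ℂ × ℂ | (aeval ψ.1 P = 0 ∧ aeval ψ.2 P = 0) ∧
        ψ.1.im = 0 ∧ ψ.2.im = 0 ∧ ψ.1 ≠ ψ.2}
      = (Re ×ˢ Re) \ ((fun α : ℂ => (α, α)) '' Re) := by
    ext ⟨a, b⟩
    simp only [Set.mem_setOf_eq, Set.mem_diff, Set.mem_prod, Set.mem_image, hRe,
      Prod.mk.injEq, not_exists]
    constructor
    · rintro ⟨⟨ha, hb⟩, hia, hib, hne⟩
      refine ⟨⟨⟨ha, hia⟩, ⟨hb, hib⟩⟩, ?_⟩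
      rintro x ⟨-, rfl, rfl⟩
      exact hne rfl
    · rintro ⟨⟨⟨ha, hia⟩, hb, hib⟩, hnot⟩
      refine ⟨⟨ha, hb⟩, hia, hib, fun hab => ?_⟩
      exact hnot a ⟨⟨ha, hia⟩, rfl, hab⟩
  have hsubd : ((fun α : ℂ => (α, α)) '' Re) ⊆ Re ×ˢ Re := by
    rintro ψ ⟨x, hx, rfl⟩; exact ⟨hx, hx⟩
  have c2 : {ψ : ℂ × ℂ | (aeval ψ.1 P = 0 ∧ aeval ψ.2 P = 0) ∧
        ψ.1.im = 0 ∧ ψ.2.im = 0 ∧ ψ.1 ≠ ψ.2}.ncard = r * (r - 1) := by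
    rw [h2, Set.ncard_diff hsubd (hRefin.image _), ncard_prod_aux hRefin hRefin,
      Set.ncard_image_of_injective _ hinjd, hr, Nat.mul_sub_one]
  -- Set 3
  have h3 : {ψ : ℂ × ℂ | (aeval ψ.1 P = 0 ∧ aeval ψ.2 P = 0) ∧ ψ.1 = ψ.2 ∧ ψ.1.im ≠ 0}
      = (fun α : ℂ => (α, α)) '' NR := by
    ext ⟨a, b⟩
    simp only [Set.mem_setOf_eq, Set.mem_image, hNR, Prod.mk.injEq]
    constructor
    · rintro ⟨⟨ha, hb⟩, hab, him⟩
      exact ⟨a, ⟨ha, him⟩, rfl, hab⟩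
    · rintro ⟨x, ⟨hx, him⟩, rfl, rfl⟩
      exact ⟨⟨hx, hx⟩, rfl, him⟩
  have c3 : {ψ : ℂ × ℂ | (aeval ψ.1 P = 0 ∧ aeval ψ.2 P = 0) ∧ ψ.1 = ψ.2 ∧ ψ.1.im ≠ 0}.ncard
      = 2 * s := by rw [h3, Set.ncard_image_of_injective _ hinjd, hNRcard]
  -- Set 4
  have h4 : {ψ : ℂ × ℂ | (aeval ψ.1 P = 0 ∧ aeval ψ.2 P = 0) ∧
        ψ.2 = (starRingEnd ℂ) ψ.1 ∧ ψ.1.im ≠ 0}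
      = (fun α : ℂ => (α, (starRingEnd ℂ) α)) '' NR := by
    ext ⟨a, b⟩
    simp only [Set.mem_setOf_eq, Set.mem_image, hNR, Prod.mk.injEq]
    constructor
    · rintro ⟨⟨ha, hb⟩, hba, him⟩
      exact ⟨a, ⟨ha, him⟩, rfl, hba.symm⟩
    · rintro ⟨x, ⟨hx, him⟩, rfl, rfl⟩
      exact ⟨⟨hx, hconj x hx⟩, rfl, him⟩
  have c4 : {ψ : ℂ × ℂ | (aeval ψ.1 P = 0 ∧ aeval ψ.2 P = 0) ∧
        ψ.2 = (starRingEnd ℂ) ψ.1 ∧ ψ.1.im ≠ 0}.ncard = 2 * s := by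
    rw [h4, Set.ncard_image_of_injective _ hinjc, hNRcard]
  refine ⟨c1, c2, c3, c4, ?_⟩
  -- Set 5
  set T1 := {ψ : ℂ × ℂ | (aeval ψ.1 P = 0 ∧ aeval ψ.2 P = 0) ∧ ψ.1 = ψ.2 ∧ ψ.1.im = 0}
    with hT1
  set T2 := {ψ : ℂ × ℂ | (aeval ψ.1 P = 0 ∧ aeval ψ.2 P = 0) ∧
      ψ.1.im = 0 ∧ ψ.2.im = 0 ∧ ψ.1 ≠ ψ.2} with hT2
  set T3 := {ψ : ℂ × ℂ | (aeval ψ.1 P = 0 ∧ aeval ψ.2 P = 0) ∧ ψ.1 = ψ.2 ∧ ψ.1.im ≠ 0}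
    with hT3
  set T4 := {ψ : ℂ × ℂ | (aeval ψ.1 P = 0 ∧ aeval ψ.2 P = 0) ∧
      ψ.2 = (starRingEnd ℂ) ψ.1 ∧ ψ.1.im ≠ 0} with hT4
  have hprodfin : (A ×ˢ A).Finite := hAfin.prod hAfin
  have hT1sub : T1 ⊆ A ×ˢ A := fun ψ h => ⟨h.1.1, h.1.2⟩
  have hT2sub : T2 ⊆ A ×ˢ A := fun ψ h => ⟨h.1.1, h.1.2⟩
  have hT3sub : T3 ⊆ A ×ˢ A := fun ψ h => ⟨h.1.1, h.1.2⟩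
  have hT4sub : T4 ⊆ A ×ˢ A := fun ψ h => ⟨h.1.1, h.1.2⟩
  have hT1fin := hprodfin.subset hT1sub
  have hT2fin := hprodfin.subset hT2sub
  have hT3fin := hprodfin.subset hT3sub
  have hT4fin := hprodfin.subset hT4sub
  have hUsub : T1 ∪ (T2 ∪ (T3 ∪ T4)) ⊆ A ×ˢ A := by
    intro ψ h
    rcases h with h | h | h | h
    exacts [hT1sub h, hT2sub h, hT3sub h, hT4sub h]
  have h5 : {ψ : ℂ × ℂ | (aeval ψ.1 P = 0 ∧ aeval ψ.2 P = 0) ∧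
        ¬(ψ.1.im = 0 ∧ ψ.2.im = 0) ∧ ψ.1 ≠ ψ.2 ∧ ψ.2 ≠ (starRingEnd ℂ) ψ.1}
      = (A ×ˢ A) \ (T1 ∪ (T2 ∪ (T3 ∪ T4))) := by
    ext ⟨a, b⟩
    simp only [Set.mem_setOf_eq, Set.mem_diff, Set.mem_prod, Set.mem_union,
      hT1, hT2, hT3, hT4, hA, not_or]
    constructor
    · rintro ⟨⟨ha, hb⟩, hnr, hne, hnc⟩
      refine ⟨⟨ha, hb⟩, ?_, ?_, ?_, ?_⟩
      · rintro ⟨-, hab, -⟩; exact hne hab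
      · rintro ⟨-, hia, hib, -⟩; exact hnr ⟨hia, hib⟩
      · rintro ⟨-, hab, -⟩; exact hne hab
      · rintro ⟨-, hbc, -⟩; exact hnc hbc
    · rintro ⟨⟨ha, hb⟩, hn1, hn2, hn3, hn4⟩
      refine ⟨⟨ha, hb⟩, ?_, ?_, ?_⟩
      · rintro ⟨hia, hib⟩
        by_cases hab : a = b
        · exact hn1 ⟨⟨ha, hb⟩, hab, hia⟩
        · exact hn2 ⟨⟨ha, hb⟩, hia, hib, hab⟩
      · intro hab
        by_cases hia : a.im = 0
        · exact hn1 ⟨⟨ha, hb⟩, hab, hia⟩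
        · exact hn3 ⟨⟨ha, hb⟩, hab, hia⟩
      · intro hbc
        by_cases hia : a.im = 0
        · have hca : (starRingEnd ℂ) a = a := Complex.conj_eq_iff_im.mpr hia
          exact hn1 ⟨⟨ha, hb⟩, (hbc.trans hca).symm, hia⟩
        · exact hn4 ⟨⟨ha, hb⟩, hbc, hia⟩
  have d12 : Disjoint T1 T2 := by
    rw [Set.disjoint_left]; rintro ψ ⟨-, hab, -⟩ ⟨-, -, -, hne⟩; exact hne hab
  have d13 : Disjoint T1 T3 := by
    rw [Set.disjoint_left]; rintro ψ ⟨-, -, him⟩ ⟨-, -, hne⟩; exact hne him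
  have d14 : Disjoint T1 T4 := by
    rw [Set.disjoint_left]; rintro ψ ⟨-, -, him⟩ ⟨-, -, hne⟩; exact hne him
  have d23 : Disjoint T2 T3 := by
    rw [Set.disjoint_left]; rintro ψ ⟨-, him, -, -⟩ ⟨-, -, hne⟩; exact hne him
  have d24 : Disjoint T2 T4 := by
    rw [Set.disjoint_left]; rintro ψ ⟨-, him, -, -⟩ ⟨-, -, hne⟩; exact hne him
  have d34 : Disjoint T3 T4 := by
    rw [Set.disjoint_left]
    rintro ψ ⟨-, hab, him⟩ ⟨-, hbc, -⟩
    exact him (Complex.conj_eq_iff_im.mp ((hab.trans hbc).symm))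
  have e34 : (T3 ∪ T4).ncard = 2 * s + 2 * s := by
    rw [Set.ncard_union_eq d34 hT3fin hT4fin, c3, c4]
  have e234 : (T2 ∪ (T3 ∪ T4)).ncard = r * (r - 1) + (2 * s + 2 * s) := by
    rw [Set.ncard_union_eq (Set.disjoint_union_right.mpr ⟨d23, d24⟩) hT2fin
      (hT3fin.union hT4fin), c2, e34]
  have e1234 : (T1 ∪ (T2 ∪ (T3 ∪ T4))).ncard = r + (r * (r - 1) + (2 * s + 2 * s)) := by
    rw [Set.ncard_union_eq (Set.disjoint_union_right.mpr ⟨d12,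
      Set.disjoint_union_right.mpr ⟨d13, d14⟩⟩) hT1fin
      ((hT2fin.union (hT3fin.union hT4fin))), c1, e234]
  rw [h5, Set.ncard_diff hUsub
    ((hT1fin.union (hT2fin.union (hT3fin.union hT4fin)))), e1234,
    ncard_prod_aux hAfin hAfin, hAcard, hn, arith_aux r s, Nat.add_sub_cancel_left]
end

section
/- Every finite-dimensional ℚ-subalgebra L of the bicomplex numbers is generated by a single element: there exists ω ∈ L with L = ℚ[ω]. -/
open Polynomial

noncomputable section BicomplexAux

/-- evaluation of a polynomial at a pair is componentwise -/
private lemma bc_aeval_pair (x : ℂ × ℂ) (p : ℚ[X]) :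
    aeval x p = (aeval x.1 p, aeval x.2 p) := by
  refine Prod.ext ?_ ?_
  · exact (Polynomial.aeval_algHom_apply (AlgHom.fst ℚ ℂ ℂ) x p).symm
  · exact (Polynomial.aeval_algHom_apply (AlgHom.snd ℚ ℂ ℂ) x p).symm

private lemma bc_aeval_mem {A : Type*} [CommRing A] [Algebra ℚ A]
    (S : Subalgebra ℚ A) {x : A} (hx : x ∈ S) (p : ℚ[X]) : aeval x p ∈ S := by
  have h : aeval x p ∈ Algebra.adjoin ℚ ({x} : Set A) := by
    rw [Algebra.adjoin_singleton_eq_range_aeval]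
    exact ⟨p, rfl⟩
  exact Algebra.adjoin_le (Set.singleton_subset_iff.mpr hx) h

private lemma bc_integral_of_mem {A : Type*} [CommRing A] [Algebra ℚ A]
    (S : Subalgebra ℚ A) (hS : FiniteDimensional ℚ S) {x : A} (hx : x ∈ S) :
    IsIntegral ℚ x :=
  IsIntegral.of_mem_of_fg S ((Submodule.fg_top _).mp (Module.finite_def.mp hS)) x hx

private lemma bc_fd_map {B : Type*} [CommRing B] [Algebra ℚ B]
    (L : Subalgebra ℚ (ℂ × ℂ)) (hL : FiniteDimensional ℚ L) (f : (ℂ × ℂ) →ₐ[ℚ] B) :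
    FiniteDimensional ℚ (L.map f) := by
  let g : L →ₗ[ℚ] (L.map f) :=
    { toFun := fun x => ⟨f x, Subalgebra.mem_map.mpr ⟨x, x.2, rfl⟩⟩
      map_add' := fun x y => Subtype.ext (map_add f _ _)
      map_smul' := fun c x => Subtype.ext (map_smul f c (x : ℂ × ℂ)) }
  refine Module.Finite.of_surjective g ?_
  rintro ⟨y, hy⟩
  obtain ⟨x, hx, rfl⟩ := Subalgebra.mem_map.mp hy
  exact ⟨⟨x, hx⟩, rfl⟩

/-- Every finite-dimensional subalgebra of ℂ is generated by one element. -/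
private lemma bc_exists_adjoin_eq (K : Subalgebra ℚ ℂ) (hK : FiniteDimensional ℚ K) :
    ∃ a : ℂ, a ∈ K ∧ Algebra.adjoin ℚ {a} = K := by
  have halg : K.IsAlgebraic := fun x hx => (bc_integral_of_mem K hK hx).isAlgebraic
  let F : IntermediateField ℚ ℂ := halg.toIntermediateField
  have hFK : F.toSubalgebra = K := rfl
  have hFfin : FiniteDimensional ℚ F := hK
  obtain ⟨α, hα⟩ := Field.exists_primitive_element ℚ F
  have hαint : IsIntegral ℚ α := IsIntegral.of_finite ℚ α
  have h1 : Algebra.adjoin ℚ ({α} : Set F) = (⊤ : Subalgebra ℚ F) := by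
    rw [← IntermediateField.adjoin_simple_toSubalgebra_of_isAlgebraic hαint.isAlgebraic, hα,
      IntermediateField.top_toSubalgebra]
  refine ⟨(α : ℂ), ?_, ?_⟩
  · exact hFK ▸ α.2
  · have h2 := congrArg (Subalgebra.map F.val) h1
    erw [AlgHom.map_adjoin, Set.image_singleton, Algebra.map_top, F.range_val, hFK] at h2
    exact h2

/-- The case where the first projection is injective on L. -/
private lemma bc_main_inj (L : Subalgebra ℚ (ℂ × ℂ)) (hL : FiniteDimensional ℚ L)
    (hinj : ∀ y ∈ L, (y : ℂ × ℂ).1 = 0 → y = 0) :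
    ∃ ω ∈ L, Algebra.adjoin ℚ {ω} = L := by
  set K : Subalgebra ℚ ℂ := L.map (AlgHom.fst ℚ ℂ ℂ) with hKdef
  have hKfin : FiniteDimensional ℚ K := bc_fd_map L hL _
  obtain ⟨a, haK, hKadj⟩ := bc_exists_adjoin_eq K hKfin
  obtain ⟨x0, hx0L, hx01⟩ := Subalgebra.mem_map.mp haK
  refine ⟨x0, hx0L, le_antisymm
    (Algebra.adjoin_le (Set.singleton_subset_iff.mpr hx0L)) ?_⟩
  intro y hy
  have hy1 : y.1 ∈ K := Subalgebra.mem_map.mpr ⟨y, hy, rfl⟩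
  rw [← hKadj, Algebra.adjoin_singleton_eq_range_aeval] at hy1
  obtain ⟨p, hp0⟩ := hy1
  have hp : aeval a p = y.1 := hp0
  have hx01' : x0.1 = a := hx01
  have hz : aeval x0 p ∈ Algebra.adjoin ℚ ({x0} : Set (ℂ × ℂ)) :=
    bc_aeval_mem _ (Algebra.self_mem_adjoin_singleton ℚ x0) p
  have hzL : aeval x0 p ∈ L := bc_aeval_mem L hx0L p
  have hyz : y = aeval x0 p := by
    have hsub : aeval x0 p - y ∈ L := sub_mem hzL hy
    have h1 : (aeval x0 p - y).1 = 0 := by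
      rw [bc_aeval_pair, hx01']
      simpa using sub_eq_zero_of_eq (by rw [hp])
    have := hinj _ hsub h1
    have := sub_eq_zero.mp this
    exact this.symm
  rw [hyz]; exact hz

/-- If `(d,0) ∈ L` with `d ≠ 0` then `(1,0) ∈ L`. -/
private lemma bc_one_zero_mem (L : Subalgebra ℚ (ℂ × ℂ)) (hL : FiniteDimensional ℚ L)
    {d : ℂ} (hd : d ≠ 0) (hdL : ((d, 0) : ℂ × ℂ) ∈ L) : ((1, 0) : ℂ × ℂ) ∈ L := by
  have hint : IsIntegral ℚ ((d, 0) : ℂ × ℂ) := bc_integral_of_mem L hL hdL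
  have hdint : IsIntegral ℚ d := hint.map (AlgHom.fst ℚ ℂ ℂ)
  set q : ℚ[X] := minpoly ℚ d with hqdef
  have hq0 : q.coeff 0 ≠ 0 := minpoly.coeff_zero_ne_zero hdint hd
  have hqd : aeval d q = 0 := minpoly.aeval ℚ d
  have hsplit : X * q.divX + C (q.coeff 0) = q := X_mul_divX_add q
  have hval : d * aeval d q.divX = -((q.coeff 0 : ℚ) : ℂ) := by
    have h := congrArg (aeval d) hsplit
    rw [map_add, map_mul, aeval_X, aeval_C, hqd] at h
    have : algebraMap ℚ ℂ (q.coeff 0) = ((q.coeff 0 : ℚ) : ℂ) := eq_ratCast _ _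
    rw [this] at h
    linear_combination h
  have hyL : ((aeval d q.divX, aeval (0 : ℂ) q.divX) : ℂ × ℂ) ∈ L := by
    have h := bc_aeval_mem L hdL q.divX
    rwa [bc_aeval_pair] at h
  have hmul : (((d, 0) : ℂ × ℂ) * (aeval d q.divX, aeval (0 : ℂ) q.divX)) ∈ L :=
    mul_mem hdL hyL
  have hmem : ((-(q.coeff 0))⁻¹ • (((d, 0) : ℂ × ℂ) * (aeval d q.divX, aeval (0 : ℂ) q.divX))) ∈ L :=
    L.smul_mem hmul _
  have heq : ((-(q.coeff 0))⁻¹ : ℚ) • (((d, 0) : ℂ × ℂ) * (aeval d q.divX, aeval (0 : ℂ) q.divX))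
      = ((1, 0) : ℂ × ℂ) := by
    have hne : ((q.coeff 0 : ℚ) : ℂ) ≠ 0 := by exact_mod_cast hq0
    refine Prod.ext ?_ ?_
    · show ((-(q.coeff 0) : ℚ)⁻¹ : ℚ) • (d * aeval d q.divX) = (1 : ℂ)
      rw [hval, Rat.smul_def]
      push_cast
      field_simp
    · show ((-(q.coeff 0) : ℚ)⁻¹ : ℚ) • ((0 : ℂ) * aeval (0 : ℂ) q.divX) = (0 : ℂ)
      simp
  rwa [heq] at hmem

private def bc_swap : (ℂ × ℂ) ≃ₐ[ℚ] (ℂ × ℂ) :=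
  AlgEquiv.ofRingEquiv (f := RingEquiv.prodComm) (fun q => rfl)

end BicomplexAux

/-- Every finite-dimensional unital ℚ-subalgebra of the bicomplex numbers
`ℂ × ℂ` is generated by a single element. -/
theorem bicomplex_extension_simple (L : Subalgebra ℚ (ℂ × ℂ))
    (hL : FiniteDimensional ℚ L) :
    ∃ ω ∈ L, Algebra.adjoin ℚ {ω} = L := by
  by_cases h2 : ∀ c : ℂ, ((0, c) : ℂ × ℂ) ∈ L → c = 0
  · refine bc_main_inj L hL ?_
    intro y hy hy1
    have hyy : y = ((0, y.2) : ℂ × ℂ) := Prod.ext hy1 rfl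
    have hy2 : y.2 = 0 := h2 y.2 (hyy ▸ hy)
    rw [hyy, hy2]
    rfl
  by_cases h1 : ∀ d : ℂ, ((d, 0) : ℂ × ℂ) ∈ L → d = 0
  · -- second projection injective : transfer via swap
    set L' := L.map bc_swap.toAlgHom with hL'def
    have hL' : FiniteDimensional ℚ L' := bc_fd_map L hL _
    have hinj' : ∀ y ∈ L', (y : ℂ × ℂ).1 = 0 → y = 0 := by
      intro y hyL' hy1
      obtain ⟨x, hx, rfl⟩ := Subalgebra.mem_map.mp hyL'
      have hx2 : x.2 = 0 := hy1
      have hx0 : ((x.1, 0) : ℂ × ℂ) ∈ L := by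
        have hxx : x = ((x.1, 0) : ℂ × ℂ) := Prod.ext rfl hx2
        rwa [← hxx]
      have hx1 : x.1 = 0 := h1 x.1 hx0
      have hx00 : x = 0 := Prod.ext hx1 hx2
      rw [hx00]
      exact map_zero _
    obtain ⟨ω, hω, hadj⟩ := bc_main_inj L' hL' hinj'
    obtain ⟨x, hx, rfl⟩ := Subalgebra.mem_map.mp hω
    refine ⟨x, hx, ?_⟩
    have hmap : (Algebra.adjoin ℚ ({x} : Set (ℂ × ℂ))).map bc_swap.toAlgHom
        = L.map bc_swap.toAlgHom := by
      rw [AlgHom.map_adjoin, Set.image_singleton]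
      exact hadj
    exact Subalgebra.map_injective (f := bc_swap.toAlgHom) bc_swap.injective hmap
  · push_neg at h1 h2
    obtain ⟨d, hdL, hd⟩ := h1
    obtain ⟨c, hcL, hc⟩ := h2
    have hE1L : ((1, 0) : ℂ × ℂ) ∈ L := bc_one_zero_mem L hL hd hdL
    have hE2L : ((0, 1) : ℂ × ℂ) ∈ L := by
      have hswapmem : ((c, 0) : ℂ × ℂ) ∈ L.map bc_swap.toAlgHom :=
        Subalgebra.mem_map.mpr ⟨(0, c), hcL, rfl⟩
      have h10 := bc_one_zero_mem _ (bc_fd_map L hL _) hc hswapmem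
      obtain ⟨x, hx, hxe⟩ := Subalgebra.mem_map.mp h10
      have hxx : x = ((0, 1) : ℂ × ℂ) :=
        Prod.ext (congrArg Prod.snd hxe) (congrArg Prod.fst hxe)
      rwa [hxx] at hx
    set K₁ := L.map (AlgHom.fst ℚ ℂ ℂ) with hK1def
    set K₂ := L.map (AlgHom.snd ℚ ℂ ℂ) with hK2def
    have hK₁ : FiniteDimensional ℚ K₁ := bc_fd_map L hL _
    have hK₂ : FiniteDimensional ℚ K₂ := bc_fd_map L hL _
    obtain ⟨a, haK, hK1adj⟩ := bc_exists_adjoin_eq K₁ hK₁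
    obtain ⟨b, hbK, hK2adj⟩ := bc_exists_adjoin_eq K₂ hK₂
    have haL : ((a, 0) : ℂ × ℂ) ∈ L := by
      obtain ⟨x, hx, hx1⟩ := Subalgebra.mem_map.mp haK
      have hx1' : x.1 = a := hx1
      have hmm := mul_mem hx hE1L
      have heq : x * ((1, 0) : ℂ × ℂ) = ((a, 0) : ℂ × ℂ) := by
        refine Prod.ext ?_ ?_ <;> simp [hx1']
      rwa [heq] at hmm
    have hbL : ((0, b) : ℂ × ℂ) ∈ L := by
      obtain ⟨x, hx, hx2⟩ := Subalgebra.mem_map.mp hbK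
      have hx2' : x.2 = b := hx2
      have hmm := mul_mem hx hE2L
      have heq : x * ((0, 1) : ℂ × ℂ) = ((0, b) : ℂ × ℂ) := by
        refine Prod.ext ?_ ?_ <;> simp [hx2']
      rwa [heq] at hmm
    have haint : IsIntegral ℚ a := bc_integral_of_mem K₁ hK₁ haK
    have hbint : IsIntegral ℚ b := bc_integral_of_mem K₂ hK₂ hbK
    set ma := minpoly ℚ a with hmadef
    have hmane : ma.map (algebraMap ℚ ℂ) ≠ 0 :=
      (Polynomial.map_ne_zero_iff (algebraMap ℚ ℂ).injective).mpr (minpoly.ne_zero haint)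
    have hbadfin : {t : ℚ | aeval (b + (t : ℂ)) ma = 0}.Finite := by
      have hsub : {t : ℚ | aeval (b + (t : ℂ)) ma = 0} ⊆
          (fun t : ℚ => b + (t : ℂ)) ⁻¹' {z : ℂ | (ma.map (algebraMap ℚ ℂ)).IsRoot z} := by
        intro t ht
        simp only [Set.mem_preimage, Set.mem_setOf_eq, IsRoot, eval_map]
        rw [← aeval_def]
        exact ht
      have hinjt : Function.Injective (fun t : ℚ => b + (t : ℂ)) := by
        intro t1 t2 h
        have h' := add_left_cancel h
        exact_mod_cast h'
      exact ((Polynomial.finite_setOf_isRoot hmane).preimage hinjt.injOn).subset hsub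
    obtain ⟨t, ht⟩ : ∃ t : ℚ, aeval (b + (t : ℂ)) ma ≠ 0 := by
      obtain ⟨t, ht⟩ := hbadfin.infinite_compl.nonempty
      exact ⟨t, ht⟩
    set b' : ℂ := b + (t : ℂ) with hb'def
    have htmem : ((t : ℝ) : ℂ) = algebraMap ℚ ℂ t := by
      push_cast
      exact (eq_ratCast (algebraMap ℚ ℂ) t).symm
    have htmem' : ((t : ℂ)) = algebraMap ℚ ℂ t := (eq_ratCast (algebraMap ℚ ℂ) t).symm
    have hb'int : IsIntegral ℚ b' := hbint.add (htmem' ▸ isIntegral_algebraMap)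
    set mb := minpoly ℚ b' with hmbdef
    have hmaa : aeval a ma = 0 := minpoly.aeval ℚ a
    have hmbb : aeval b' mb = 0 := minpoly.aeval ℚ b'
    have hndvd : ¬ ma ∣ mb := by
      intro hdvd
      have heqm : ma = mb :=
        Polynomial.eq_of_monic_of_associated (minpoly.monic haint) (minpoly.monic hb'int)
          ((minpoly.irreducible haint).associated_of_dvd (minpoly.irreducible hb'int) hdvd)
      exact ht (by rw [heqm]; exact hmbb)
    obtain ⟨u, v, huv⟩ : IsCoprime ma mb :=
      (minpoly.irreducible haint).coprime_iff_not_dvd.mpr hndvd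
    have hK2adj' : Algebra.adjoin ℚ ({b'} : Set ℂ) = K₂ := by
      apply le_antisymm
      · refine Algebra.adjoin_le (Set.singleton_subset_iff.mpr ?_)
        exact add_mem hbK (htmem' ▸ K₂.algebraMap_mem t)
      · rw [← hK2adj]
        refine Algebra.adjoin_le (Set.singleton_subset_iff.mpr ?_)
        have hbb : b = b' - algebraMap ℚ ℂ t := by rw [hb'def, htmem']; ring
        rw [hbb]
        exact sub_mem (Algebra.self_mem_adjoin_singleton ℚ b') (Subalgebra.algebraMap_mem _ t)
    set ω : ℂ × ℂ := (a, b') with hωdef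
    have hωL : ω ∈ L := by
      have h01t : ((0, (t : ℂ)) : ℂ × ℂ) ∈ L := by
        have hs := L.smul_mem hE2L t
        have heq : t • ((0, 1) : ℂ × ℂ) = ((0, (t : ℂ)) : ℂ × ℂ) := by
          refine Prod.ext (by simp) (by simp [Rat.smul_def])
        rwa [heq] at hs
      have heq : ((a, 0) : ℂ × ℂ) + ((0, b) : ℂ × ℂ) + ((0, (t : ℂ)) : ℂ × ℂ) = ω := by
        refine Prod.ext (by simp [hωdef]) (by simp [hb'def, hωdef])
      rw [← heq]
      exact add_mem (add_mem haL hbL) h01t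
    set M := Algebra.adjoin ℚ ({ω} : Set (ℂ × ℂ)) with hMdef
    have hML : M ≤ L := Algebra.adjoin_le (Set.singleton_subset_iff.mpr hωL)
    have hωM : ω ∈ M := Algebra.self_mem_adjoin_singleton ℚ ω
    have hω1 : ω.1 = a := rfl
    have hω2 : ω.2 = b' := rfl
    have he1M : ((1, 0) : ℂ × ℂ) ∈ M := by
      have hcalc : aeval ω (v * mb) = ((1, 0) : ℂ × ℂ) := by
        rw [bc_aeval_pair, hω1, hω2]
        have hfst : aeval a (v * mb) = 1 := by
          have h := congrArg (aeval a) huv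
          rw [map_add, map_mul, map_mul, hmaa, mul_zero, zero_add, map_one] at h
          rw [map_mul]; exact h
        have hsnd : aeval b' (v * mb) = 0 := by rw [map_mul, hmbb, mul_zero]
        rw [hfst, hsnd]
      rw [← hcalc]
      exact bc_aeval_mem M hωM _
    have he2M : ((0, 1) : ℂ × ℂ) ∈ M := by
      have hcalc : aeval ω (u * ma) = ((0, 1) : ℂ × ℂ) := by
        rw [bc_aeval_pair, hω1, hω2]
        have hfst : aeval a (u * ma) = 0 := by rw [map_mul, hmaa, mul_zero]
        have hsnd : aeval b' (u * ma) = 1 := by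
          have h := congrArg (aeval b') huv
          rw [map_add, map_mul, map_mul, hmbb, mul_zero, add_zero, map_one] at h
          rw [map_mul]; exact h
        rw [hfst, hsnd]
      rw [← hcalc]
      exact bc_aeval_mem M hωM _
    have hT1 : ∀ z ∈ K₁, ((z, 0) : ℂ × ℂ) ∈ M := by
      intro z hz
      rw [← hK1adj, Algebra.adjoin_singleton_eq_range_aeval] at hz
      obtain ⟨p, hp0⟩ := hz
      have hp : aeval a p = z := hp0
      have heq : ((z, 0) : ℂ × ℂ) = aeval ω p * ((1, 0) : ℂ × ℂ) := by
        rw [bc_aeval_pair, hω1, hω2]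
        refine Prod.ext (by simp [hp]) (by simp)
      rw [heq]
      exact mul_mem (bc_aeval_mem M hωM p) he1M
    have hT2 : ∀ z ∈ K₂, ((0, z) : ℂ × ℂ) ∈ M := by
      intro z hz
      rw [← hK2adj', Algebra.adjoin_singleton_eq_range_aeval] at hz
      obtain ⟨p, hp0⟩ := hz
      have hp : aeval b' p = z := hp0
      have heq : ((0, z) : ℂ × ℂ) = aeval ω p * ((0, 1) : ℂ × ℂ) := by
        rw [bc_aeval_pair, hω1, hω2]
        refine Prod.ext (by simp) (by simp [hp])
      rw [heq]
      exact mul_mem (bc_aeval_mem M hωM p) he2M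
    refine ⟨ω, hωL, le_antisymm hML ?_⟩
    intro y hy
    have hy1 := hT1 y.1 (Subalgebra.mem_map.mpr ⟨y, hy, rfl⟩)
    have hy2 := hT2 y.2 (Subalgebra.mem_map.mpr ⟨y, hy, rfl⟩)
    have hysplit : y = ((y.1, 0) : ℂ × ℂ) + ((0, y.2) : ℂ × ℂ) := by
      refine Prod.ext (by simp) (by simp)
    rw [hysplit]
    exact add_mem hy1 hy2
end
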